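/- Fix K ≥ 1 and nonnegative weights w₁, …, w_K ≥ 0. The function F : ℝ^K → ℝ defined by F(z₁, …, z_K) = −∑_{k=1}^K w_k · log p(z_k), where p(z) = 2(1 − Φ(|z|)) is the two-sided p-value function, is convex on ℝ^K. -/

import Mathlib

/-- The standard normal density φ(t) = (1/√(2π))·exp(−t²/2). -/
noncomputable def stdNormalPDF (t : ℝ) : ℝ :=
  (Real.sqrt (2 * Real.pi))⁻¹ * Real.exp (-t ^ 2 / 2)

/-- The standard normal cumulative distribution function Φ(t) = ∫_{−∞}^t φ(s) ds. -/
noncomputable def stdNormalCDF (t : ℝ) : ℝ :=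
  ∫ s in Set.Iic t, stdNormalPDF s

/-- The two-sided p-value function p(z) = 2(1 − Φ(|z|)). -/
noncomputable def pValue (z : ℝ) : ℝ := 2 * (1 - stdNormalCDF |z|)

open MeasureTheory Set Real

lemma pdf_pos (t : ℝ) : 0 < stdNormalPDF t := by
  unfold stdNormalPDF
  positivity

lemma pdf_cont : Continuous stdNormalPDF := by
  unfold stdNormalPDF
  continuity

lemma pdf_eq (t : ℝ) : stdNormalPDF t = (Real.sqrt (2 * Real.pi))⁻¹ * Real.exp (-(1/2) * t ^ 2) := by
  unfold stdNormalPDF; ring_nf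

lemma pdf_integrable : Integrable stdNormalPDF := by
  have h := (integrable_exp_neg_mul_sq (by norm_num : (0:ℝ) < 1/2)).const_mul
    (Real.sqrt (2 * Real.pi))⁻¹
  refine h.congr ?_
  filter_upwards with t
  rw [pdf_eq]

lemma pdf_integral : ∫ t, stdNormalPDF t = 1 := by
  have h2 : (0:ℝ) < 2 * Real.pi := by positivity
  simp_rw [pdf_eq, integral_const_mul, integral_gaussian]
  rw [show Real.pi / (1/2) = 2 * Real.pi by ring]
  rw [inv_mul_cancel₀ (by positivity)]

noncomputable def QQ (t : ℝ) : ℝ := ∫ s in Set.Ioi t, stdNormalPDF s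

lemma cdf_add_Q (t : ℝ) : stdNormalCDF t + QQ t = 1 := by
  rw [stdNormalCDF, QQ, ← setIntegral_union (Iic_disjoint_Ioi le_rfl) measurableSet_Ioi
    pdf_integrable.integrableOn pdf_integrable.integrableOn, Iic_union_Ioi,
    setIntegral_univ, pdf_integral]

lemma Q_eq (t : ℝ) : QQ t = 1 - stdNormalCDF t := by linarith [cdf_add_Q t]

lemma Q_pos (t : ℝ) : 0 < QQ t := by
  have : (0:ℝ) < ∫ s in Set.Ioc t (t+1), stdNormalPDF s := by
    rw [← intervalIntegral.integral_of_le (by linarith)]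
    apply intervalIntegral.intervalIntegral_pos_of_pos_on
      (pdf_cont.intervalIntegrable _ _) (fun x _ => pdf_pos x) (by linarith)
  have mono : (∫ s in Set.Ioc t (t+1), stdNormalPDF s) ≤ QQ t := by
    apply setIntegral_mono_set pdf_integrable.integrableOn
      (Filter.Eventually.of_forall fun x => (pdf_pos x).le)
    exact HasSubset.Subset.eventuallyLE Ioc_subset_Ioi_self
  linarith

lemma hasDerivAt_cdf (t : ℝ) : HasDerivAt stdNormalCDF (stdNormalPDF t) t := by
  have key : ∀ u : ℝ, stdNormalCDF u = stdNormalCDF 0 + ∫ s in (0:ℝ)..u, stdNormalPDF s := by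
    intro u
    unfold stdNormalCDF
    have := intervalIntegral.integral_Iic_sub_Iic (a := (0:ℝ)) (b := u)
      (f := stdNormalPDF) (μ := volume) pdf_integrable.integrableOn
      pdf_integrable.integrableOn
    linarith
  have h : HasDerivAt (fun u => stdNormalCDF 0 + ∫ s in (0:ℝ)..u, stdNormalPDF s)
      (stdNormalPDF t) t := by
    apply HasDerivAt.const_add
    exact intervalIntegral.integral_hasDerivAt_right (pdf_cont.intervalIntegrable _ _)
      (pdf_cont.stronglyMeasurableAtFilter _ _) pdf_cont.continuousAt
  exact h.congr_of_eventuallyEq (Filter.Eventually.of_forall key)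

lemma hasDerivAt_Q (t : ℝ) : HasDerivAt QQ (-(stdNormalPDF t)) t := by
  have : HasDerivAt (fun u => 1 - stdNormalCDF u) (-(stdNormalPDF t)) t :=
    (hasDerivAt_cdf t).const_sub 1
  exact this.congr_of_eventuallyEq (Filter.Eventually.of_forall fun u => Q_eq u)

lemma hasDerivAt_pdf (t : ℝ) : HasDerivAt stdNormalPDF (-t * stdNormalPDF t) t := by
  have h1 : HasDerivAt (fun u : ℝ => -u ^ 2 / 2) (-t) t := by
    have := ((hasDerivAt_pow 2 t).neg).div_const 2
    simpa using this.congr_deriv (by ring)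
  have h2 : HasDerivAt (fun u : ℝ => Real.exp (-u ^ 2 / 2))
      (Real.exp (-t ^ 2 / 2) * (-t)) t := h1.exp
  have := h2.const_mul (Real.sqrt (2 * Real.pi))⁻¹
  unfold stdNormalPDF
  refine this.congr_deriv ?_
  ring

lemma pdf_tendsto_zero : Filter.Tendsto stdNormalPDF Filter.atTop (nhds 0) := by
  have h1 : Filter.Tendsto (fun t : ℝ => -t ^ 2 / 2) Filter.atTop Filter.atBot := by
    apply Filter.Tendsto.atBot_div_const (by norm_num)
    exact (Filter.tendsto_atBot_mono (fun x => by nlinarith [sq_nonneg (x-1)] : ∀ x:ℝ, -x^2 ≤ -x + 1) (Filter.tendsto_atBot_add_const_right _ 1 (Filter.tendsto_neg_atBot_iff.mpr Filter.tendsto_id)))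
  have h2 := Real.tendsto_exp_atBot.comp h1
  have := h2.const_mul (Real.sqrt (2 * Real.pi))⁻¹
  simp only [mul_zero] at this
  exact this.congr fun t => rfl

lemma integral_mul_pdf {t : ℝ} (ht : 0 < t) :
    ∫ s in Set.Ioi t, s * stdNormalPDF s = stdNormalPDF t := by
  have h := integral_Ioi_of_hasDerivAt_of_nonneg (g := fun s => -(stdNormalPDF s))
    (g' := fun s => s * stdNormalPDF s) (a := t) (l := 0)
    ((pdf_cont.neg).continuousWithinAt)
    (fun x _ => by exact (hasDerivAt_pdf x).neg.congr_deriv (by ring))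
    (fun x hx => mul_nonneg (le_of_lt (lt_trans ht hx)) (pdf_pos x).le)
    (by simpa using pdf_tendsto_zero.neg)
  simpa using h

lemma integrable_mul_pdf {t : ℝ} (ht : 0 < t) :
    IntegrableOn (fun s => s * stdNormalPDF s) (Set.Ioi t) := by
  exact integrableOn_Ioi_deriv_of_nonneg ((pdf_cont.neg).continuousWithinAt)
    (fun x hx => by exact (hasDerivAt_pdf x).neg.congr_deriv (by ring))
    (fun x hx => mul_nonneg (le_of_lt (lt_trans ht hx)) (pdf_pos x).le)
    (by convert pdf_tendsto_zero.neg using 2; simp)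

lemma mills (t : ℝ) : t * QQ t ≤ stdNormalPDF t := by
  rcases le_or_gt t 0 with ht | ht
  · calc t * QQ t ≤ 0 := mul_nonpos_of_nonpos_of_nonneg ht (Q_pos t).le
    _ ≤ stdNormalPDF t := (pdf_pos t).le
  · have key : QQ t ≤ t⁻¹ * stdNormalPDF t := by
      rw [← integral_mul_pdf ht, ← integral_const_mul]
      apply setIntegral_mono_on pdf_integrable.integrableOn
        ((integrable_mul_pdf ht).const_mul _) measurableSet_Ioi
      intro x hx
      have hx' : t < x := hx
      rw [inv_mul_eq_div, le_div_iff₀ ht]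
      have := (pdf_pos x).le
      nlinarith
    calc t * QQ t ≤ t * (t⁻¹ * stdNormalPDF t) :=
      mul_le_mul_of_nonneg_left key ht.le
    _ = stdNormalPDF t := by field_simp

noncomputable def hfun (t : ℝ) : ℝ := -Real.log (2 * QQ t)

noncomputable def hfun' (t : ℝ) : ℝ := stdNormalPDF t / QQ t

lemma hasDerivAt_hfun (t : ℝ) : HasDerivAt hfun (hfun' t) t := by
  have hQ := Q_pos t
  have h1 : HasDerivAt (fun u => 2 * QQ u) (2 * -(stdNormalPDF t)) t :=
    (hasDerivAt_Q t).const_mul 2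
  have h2 := (h1.log (by positivity)).neg
  unfold hfun hfun'
  refine h2.congr_deriv ?_
  field_simp

lemma hasDerivAt_hfun' (t : ℝ) : HasDerivAt hfun'
    ((-t * stdNormalPDF t * QQ t + stdNormalPDF t * stdNormalPDF t) / QQ t ^ 2) t := by
  have hQ := (Q_pos t).ne'
  have := (hasDerivAt_pdf t).div (hasDerivAt_Q t) hQ
  unfold hfun'
  refine this.congr_deriv ?_
  ring

lemma hfun_convex : ConvexOn ℝ Set.univ hfun := by
  apply convexOn_of_hasDerivWithinAt2_nonneg (f' := hfun')
    (f'' := fun t => (-t * stdNormalPDF t * QQ t + stdNormalPDF t * stdNormalPDF t) / QQ t ^ 2)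
    convex_univ
  · exact fun t _ => (hasDerivAt_hfun t).continuousAt.continuousWithinAt
  · exact fun t _ => (hasDerivAt_hfun t).hasDerivWithinAt
  · exact fun t _ => (hasDerivAt_hfun' t).hasDerivWithinAt
  · intro t _
    have h1 := mills t
    have h2 := pdf_pos t
    have h3 := Q_pos t
    apply div_nonneg _ (sq_nonneg _)
    nlinarith

lemma hfun_mono : MonotoneOn hfun (Set.Ici 0) := by
  apply monotoneOn_of_deriv_nonneg (convex_Ici 0)
  · exact fun t _ => (hasDerivAt_hfun t).continuousAt.continuousWithinAt
  · exact fun t _ => (hasDerivAt_hfun t).differentiableAt.differentiableWithinAt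
  · intro t ht
    rw [(hasDerivAt_hfun t).deriv]
    exact le_of_lt (div_pos (pdf_pos t) (Q_pos t))

lemma neg_log_pValue (z : ℝ) : -Real.log (pValue z) = hfun |z| := by
  rw [pValue, hfun, Q_eq]

lemma range_abs_eq : (fun x : ℝ => |x|) '' Set.univ = Set.Ici 0 := by
  rw [Set.image_univ]
  ext y
  constructor
  · rintro ⟨x, rfl⟩; exact abs_nonneg x
  · intro hy; exact ⟨y, abs_of_nonneg hy⟩

lemma comp_convex : ConvexOn ℝ Set.univ (fun z : ℝ => hfun |z|) := by
  have habs : ConvexOn ℝ Set.univ (fun x : ℝ => |x|) := by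
    have := convexOn_univ_norm (E := ℝ)
    exact this
  have := ConvexOn.comp (f := fun x : ℝ => |x|) (g := hfun)
    (by rw [range_abs_eq]; exact hfun_convex.subset (Set.subset_univ _) (convex_Ici 0))
    habs (by rw [range_abs_eq]; exact hfun_mono)
  exact this

/-- For K ≥ 1 and nonnegative weights w₁, …, w_K ≥ 0, the function
F(z₁, …, z_K) = −∑_{k=1}^K w_k · log p(z_k) is convex on ℝ^K. -/
theorem stmt_3 (K : ℕ) (hK : 1 ≤ K) (w : Fin K → ℝ) (hw : ∀ k, 0 ≤ w k) :
    ConvexOn ℝ Set.univ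
      (fun z : Fin K → ℝ => -∑ k, w k * Real.log (pValue (z k))) := by
  have heq : ∀ z : Fin K → ℝ,
      -∑ k, w k * Real.log (pValue (z k)) = ∑ k, w k * hfun |z k| := by
    intro z
    rw [← Finset.sum_neg_distrib]
    congr 1
    ext k
    rw [← neg_log_pValue, neg_mul_eq_mul_neg]
  simp_rw [heq]
  refine ⟨convex_univ, ?_⟩
  intro x _ y _ a b ha hb hab
  simp only [smul_eq_mul]
  rw [Finset.mul_sum, Finset.mul_sum, ← Finset.sum_add_distrib]
  apply Finset.sum_le_sum
  intro k _
  have hx : (a • x + b • y) k = a * x k + b * y k := by simp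
  rw [hx]
  have hconv := comp_convex.2 (Set.mem_univ (x k)) (Set.mem_univ (y k)) ha hb hab
  simp only [smul_eq_mul] at hconv
  calc w k * hfun |a * x k + b * y k| ≤ w k * (a * hfun |x k| + b * hfun |y k|) :=
        mul_le_mul_of_nonneg_left hconv (hw k)
    _ = a * (w k * hfun |x k|) + b * (w k * hfun |y k|) := by ring
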